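/- Let S′ be a digraph and T a directed tree with V(T) = V(S′) and E(T) ∩ E(S′) = ∅, and let C be a directed cycle of S′ ∪ T with E(C) ∩ E(S′) minimal among all directed cycles of S′ ∪ T (C is optimal). Then for every directed path P of T, the intersection of C with P is either a directed path or empty. -/

import Mathlib

/-- A directed cycle in the digraph given by the relation `A`: `n ≥ 1` distinct
vertices `f 0, f 1, …, f (n-1)` with an edge from each to the next (cyclically). -/
structure DirCycle {V : Type} (A : V → V → Prop) where
  n : ℕ
  pos : 0 < n
  f : ZMod n → V
  inj : Function.Injective f
  step : ∀ i, A (f i) (f (i + 1))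

/-- The (directed) edge set of a directed cycle. -/
def DirCycle.edges {V : Type} {A : V → V → Prop} (C : DirCycle A) : Set (V × V) :=
  {p | ∃ i, p.1 = C.f i ∧ p.2 = C.f (i + 1)}

@[reducible] def DirCycle.rot {V : Type} {A : V → V → Prop} (C : DirCycle A) (t : ZMod C.n) : DirCycle A where
  n := C.n
  pos := C.pos
  f := fun i => C.f (i + t)
  inj := fun i j h => by
    have := C.inj h
    exact add_right_cancel this
  step := fun i => by
    show A (C.f (i + t)) (C.f (i + 1 + t))
    have h : i + 1 + t = i + t + 1 := by ring
    rw [h]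
    exact C.step (i + t)

@[simp] lemma DirCycle.rot_n {V : Type} {A : V → V → Prop} (C : DirCycle A) (t : ZMod C.n) :
    (C.rot t).n = C.n := rfl

@[simp] lemma DirCycle.rot_f {V : Type} {A : V → V → Prop} (C : DirCycle A) (t i : ZMod C.n) :
    (C.rot t).f i = C.f (i + t) := rfl

lemma DirCycle.rot_edges {V : Type} {A : V → V → Prop} (C : DirCycle A) (t : ZMod C.n) :
    (C.rot t).edges = C.edges := by
  ext e
  show (∃ i : ZMod C.n, e.1 = C.f (i + t) ∧ e.2 = C.f (i + 1 + t)) ↔ _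
  constructor
  · rintro ⟨i, h1, h2⟩
    refine ⟨i + t, h1, ?_⟩
    rw [h2]; congr 1; ring
  · rintro ⟨i, h1, h2⟩
    refine ⟨i - t, by rw [h1]; congr 1; ring, by rw [h2]; congr 1; ring⟩
lemma DirCycle.rot_range {V : Type} {A : V → V → Prop} (C : DirCycle A) (t : ZMod C.n) :
    Set.range (C.rot t).f = Set.range C.f := by
  ext v
  show (∃ i : ZMod C.n, C.f (i + t) = v) ↔ _
  constructor
  · rintro ⟨i, rfl⟩; exact ⟨i + t, rfl⟩
  · rintro ⟨i, rfl⟩; exact ⟨i - t, by congr 1; ring⟩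

def mkWalk {V : Type} (G : SimpleGraph V) (g : ℕ → V) :
    (L : ℕ) → (∀ s, s < L → G.Adj (g s) (g (s + 1))) → G.Walk (g 0) (g L)
  | 0, _ => SimpleGraph.Walk.nil
  | (L + 1), h =>
    (mkWalk G g L (fun s hs => h s (Nat.lt_succ_of_lt hs))).concat (h L (Nat.lt_succ_self L))

lemma mkWalk_support {V : Type} (G : SimpleGraph V) (g : ℕ → V) :
    ∀ (L : ℕ) (h : ∀ s, s < L → G.Adj (g s) (g (s + 1))),
      (mkWalk G g L h).support = (List.range (L + 1)).map g
  | 0, _ => by simp [mkWalk, List.range_succ]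
  | (L + 1), h => by
    rw [mkWalk, SimpleGraph.Walk.support_concat, mkWalk_support G g L,
      List.range_succ (n := L + 1)]
    simp

lemma mkWalk_length {V : Type} (G : SimpleGraph V) (g : ℕ → V) :
    ∀ (L : ℕ) (h : ∀ s, s < L → G.Adj (g s) (g (s + 1))),
      (mkWalk G g L h).length = L
  | 0, _ => rfl
  | (L + 1), h => by
    rw [mkWalk, SimpleGraph.Walk.length_concat, mkWalk_length G g L]

lemma mkWalk_isPath {V : Type} (G : SimpleGraph V) (g : ℕ → V) (L : ℕ)
    (h : ∀ s, s < L → G.Adj (g s) (g (s + 1)))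
    (hinj : ∀ s t, s ≤ L → t ≤ L → g s = g t → s = t) :
    (mkWalk G g L h).IsPath := by
  rw [SimpleGraph.Walk.isPath_def, mkWalk_support]
  refine List.Nodup.map_on ?_ List.nodup_range
  intro x hx y hy hxy
  rw [List.mem_range] at hx hy
  exact hinj x y (by omega) (by omega) hxy

lemma mkWalk_mem_support {V : Type} (G : SimpleGraph V) (g : ℕ → V) (L : ℕ)
    (h : ∀ s, s < L → G.Adj (g s) (g (s + 1))) (s : ℕ) (hs : s ≤ L) :
    g s ∈ (mkWalk G g L h).support := by
  rw [mkWalk_support]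
  exact List.mem_map_of_mem (f := g) (List.mem_range.mpr (by omega))

lemma mkWalk_support_subset {V : Type} (G : SimpleGraph V) (g : ℕ → V) (L : ℕ)
    (h : ∀ s, s < L → G.Adj (g s) (g (s + 1))) :
    ∀ v ∈ (mkWalk G g L h).support, ∃ s, s ≤ L ∧ v = g s := by
  rw [mkWalk_support]
  intro v hv
  obtain ⟨s, hs, rfl⟩ := List.mem_map.mp hv
  exact ⟨s, by rw [List.mem_range] at hs; omega, rfl⟩

set_option maxHeartbeats 2000000 in
lemma reroute {V : Type} {A : V → V → Prop} (C : DirCycle A)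
    (k L : ℕ) (hk1 : 1 ≤ k) (hkn : k < C.n) (hL1 : 1 ≤ L)
    (q : ℕ → V)
    (hq0 : q 0 = C.f 0) (hqL : q L = C.f (k : ZMod C.n))
    (hqinj : ∀ s t, s ≤ L → t ≤ L → q s = q t → s = t)
    (hqoff : ∀ s, 0 < s → s < L → q s ∉ Set.range C.f)
    (hqedge : ∀ s, s < L → A (q s) (q (s + 1)))
    (hne : ¬ (k = 1 ∧ L = 1)) :
    ∃ C' : DirCycle A,
      (∀ e ∈ C'.edges, e ∈ C.edges ∨ ∃ s, s < L ∧ e = (q s, q (s + 1))) ∧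
      (∀ t : ℕ, t < k →
        ((C.f (t : ZMod C.n), C.f ((t : ZMod C.n) + 1)) : V × V) ∉ C'.edges) := by
  set n := C.n with hn
  haveI : NeZero n := ⟨by omega⟩
  set n' := (n - k) + L with hn'
  have hn'2 : 2 ≤ n' := by omega
  haveI : NeZero n' := ⟨by omega⟩
  have castinj : ∀ a b : ℕ, a < n → b < n → ((a : ZMod n) = (b : ZMod n)) → a = b := by
    intro a b ha hb h
    have := congrArg ZMod.val h
    rwa [ZMod.val_cast_of_lt ha, ZMod.val_cast_of_lt hb] at this
  set F : ℕ → V := fun i => if i < L then q i else C.f ((k + (i - L) : ℕ) : ZMod n) with hF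
  have hFq : ∀ s, s ≤ L → F s = q s := by
    intro s hs
    rcases lt_or_eq_of_le hs with h | h
    · simp [hF, h]
    · subst h
      simp only [hF, lt_self_iff_false, if_false, Nat.sub_self, Nat.add_zero]
      exact hqL.symm
  have hFc : ∀ s, L ≤ s → F s = C.f ((k + (s - L) : ℕ) : ZMod n) := by
    intro s hs
    simp only [hF]
    rw [if_neg (by omega)]
  have hFinj : ∀ a b, a < n' → b < n' → F a = F b → a = b := by
    have key : ∀ a b, a < n' → b < n' → a < L → L ≤ b → F a = F b → False := by
      intro a b ha hb haL hbL h
      rw [hFq a (le_of_lt haL), hFc b hbL] at h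
      rcases Nat.eq_zero_or_pos a with h0 | h0
      · subst h0
        rw [hq0] at h
        have h2 := C.inj h
        have : (0 : ℕ) = k + (b - L) :=
          castinj 0 _ (by omega) (by omega) (by simpa using h2)
        omega
      · exact hqoff a h0 haL ⟨_, h.symm⟩
    intro a b ha hb h
    rcases Nat.lt_or_ge a L with haL | haL <;> rcases Nat.lt_or_ge b L with hbL | hbL
    · exact hqinj a b (by omega) (by omega)
        (by rwa [hFq a (by omega), hFq b (by omega)] at h)
    · exact (key a b ha hb haL hbL h).elim
    · exact (key b a hb ha hbL haL h.symm).elim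
    · rw [hFc a haL, hFc b hbL] at h
      have h2 := C.inj h
      have := castinj _ _ (by omega) (by omega) h2
      omega
  have valinj : ∀ i j : ZMod n', i.val = j.val → i = j := by
    intro i j h
    have h1 := ZMod.natCast_rightInverse (n := n') i
    have h2 := ZMod.natCast_rightInverse (n := n') j
    rw [← h1, ← h2, h]
  have hsucc : ∀ i : ZMod n', (i + 1).val = (i.val + 1) % n' := by
    intro i
    rw [show (1 : ZMod n') = ((1 : ℕ) : ZMod n') from by norm_cast,
      ZMod.val_add, ZMod.val_natCast, Nat.mod_eq_of_lt (show 1 < n' by omega)]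
  refine ⟨⟨n', by omega, fun i => F i.val, ?_, ?_⟩, ?_, ?_⟩
  · intro i j h
    exact valinj i j (hFinj i.val j.val (ZMod.val_lt i) (ZMod.val_lt j) h)
  · intro i
    show A (F i.val) (F (i + 1).val)
    have hv : i.val < n' := ZMod.val_lt i
    rw [hsucc i]
    rcases Nat.lt_or_ge (i.val + 1) n' with hlt | hge
    · rw [Nat.mod_eq_of_lt hlt]
      rcases Nat.lt_or_ge i.val L with hiL | hiL
      · rw [hFq i.val (by omega), hFq (i.val + 1) (by omega)]
        exact hqedge i.val hiL
      · rw [hFc i.val hiL, hFc (i.val + 1) (by omega)]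
        have harith : ((k + (i.val + 1 - L) : ℕ) : ZMod n)
            = ((k + (i.val - L) : ℕ) : ZMod n) + 1 := by
          rw [show k + (i.val + 1 - L) = (k + (i.val - L)) + 1 from by omega]
          push_cast
          ring
        rw [harith]
        exact C.step _
    · have h0 : i.val + 1 = n' := by omega
      rw [h0, Nat.mod_self]
      have h1 : i.val = n' - 1 := by omega
      rw [h1, hFc (n' - 1) (by omega), hFq 0 (by omega), hq0]
      have e1 : ((k + (n' - 1 - L) : ℕ) : ZMod n) = ((n - 1 : ℕ) : ZMod n) := by
        congr 1
        omega
      rw [e1]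
      have e2 : (0 : ZMod n) = ((n - 1 : ℕ) : ZMod n) + 1 := by
        have h3 : ((n - 1 : ℕ) : ZMod n) + 1 = ((n - 1 + 1 : ℕ) : ZMod n) := by
          push_cast
          ring
        rw [h3, show n - 1 + 1 = n from by omega, ZMod.natCast_self]
      rw [e2]
      exact C.step _
  · rintro ⟨e1, e2⟩ ⟨i, h1, h2⟩
    simp only at h1 h2
    rw [hsucc i] at h2
    have hv : i.val < n' := ZMod.val_lt i
    rcases Nat.lt_or_ge i.val L with hiL | hiL
    · right
      refine ⟨i.val, hiL, ?_⟩
      have hlt : i.val + 1 < n' := by omega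
      rw [Nat.mod_eq_of_lt hlt] at h2
      rw [hFq _ (by omega)] at h1
      rw [hFq _ (by omega)] at h2
      rw [h1, h2]
    · left
      rcases Nat.lt_or_ge (i.val + 1) n' with hlt | hge
      · rw [Nat.mod_eq_of_lt hlt] at h2
        refine ⟨((k + (i.val - L) : ℕ) : ZMod n),
          by show e1 = _; rw [h1, hFc _ hiL], ?_⟩
        show e2 = C.f (((k + (i.val - L) : ℕ) : ZMod n) + 1)
        rw [h2, hFc _ (by omega)]
        congr 1
        rw [show k + (i.val + 1 - L) = (k + (i.val - L)) + 1 from by omega]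
        push_cast
        ring
      · have h0 : i.val + 1 = n' := by omega
        rw [h0, Nat.mod_self] at h2
        refine ⟨((n - 1 : ℕ) : ZMod n), ?_, ?_⟩
        · show e1 = _
          rw [h1, hFc _ hiL]
          congr 2
          omega
        · show e2 = C.f (((n - 1 : ℕ) : ZMod n) + 1)
          rw [h2, hFq 0 (by omega), hq0]
          congr 1
          have h3 : ((n - 1 : ℕ) : ZMod n) + 1 = ((n - 1 + 1 : ℕ) : ZMod n) := by
            push_cast
            ring
          rw [h3, show n - 1 + 1 = n from by omega, ZMod.natCast_self]
  · rintro t ht ⟨i, h1, h2⟩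
    simp only at h1 h2
    rw [hsucc i] at h2
    have hv : i.val < n' := ZMod.val_lt i
    have htn : t < n := by omega
    rcases Nat.lt_or_ge i.val L with hiL | hiL
    · rw [hFq _ (by omega)] at h1
      rcases Nat.eq_zero_or_pos i.val with h0 | h0
      · rw [h0, hq0] at h1
        have ht0 : t = 0 := castinj t 0 htn (by omega) (by simpa using C.inj h1)
        subst ht0
        rw [h0, Nat.mod_eq_of_lt (by omega : 1 < n')] at h2
        rcases Nat.lt_or_ge 1 L with hL2 | hL2
        · rw [hFq 1 (by omega)] at h2
          exact hqoff 1 (by omega) hL2 ⟨_, h2⟩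
        · have hL1' : L = 1 := by omega
          rw [hFq 1 (by omega), show (1 : ℕ) = L from hL1'.symm, hqL] at h2
          have hcast : ((0 : ℕ) : ZMod n) + 1 = ((1 : ℕ) : ZMod n) := by push_cast; ring
          rw [hcast] at h2
          have : (1 : ℕ) = k := castinj 1 k (by omega) (by omega) (C.inj h2)
          exact hne ⟨this.symm, hL1'⟩
      · exact hqoff i.val h0 hiL ⟨_, h1⟩
    · rw [hFc _ hiL] at h1
      have := castinj t _ htn (by omega) (C.inj h1)
      omega

set_option maxHeartbeats 2000000 in
lemma main_aux {V : Type} (S' T : V → V → Prop)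
    (hdisj : ∀ a b, T a b → ¬ S' a b)
    (htree : (SimpleGraph.fromRel T).IsTree)
    (hirr : ∀ a, ¬ T a a)
    (C : DirCycle (fun a b => S' a b ∨ T a b))
    (hopt : ∀ C' : DirCycle (fun a b => S' a b ∨ T a b),
      C'.edges ∩ {p : V × V | S' p.1 p.2} ⊆ C.edges ∩ {p : V × V | S' p.1 p.2} →
      C.edges ∩ {p : V × V | S' p.1 p.2} ⊆ C'.edges ∩ {p : V × V | S' p.1 p.2})
    (a b : ZMod C.n) (hab : a ≠ b) (L : ℕ) (hL1 : 1 ≤ L)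
    (q : ℕ → V) (hq0 : q 0 = C.f a) (hqL : q L = C.f b)
    (hqinj : ∀ s t, s ≤ L → t ≤ L → q s = q t → s = t)
    (hqoff : ∀ s, 0 < s → s < L → q s ∉ Set.range C.f)
    (hqedge : ∀ s, s < L → T (q s) (q (s + 1)))
    (hne : ¬ ((b - a).val = 1 ∧ L = 1)) : False := by
  haveI : NeZero C.n := ⟨C.pos.ne'⟩
  let kk := (b - a).val
  have hkk1 : 1 ≤ kk := by
    rcases Nat.eq_zero_or_pos kk with h | h
    · exact absurd (sub_eq_zero.mp ((ZMod.val_eq_zero _).mp h)) (fun he => hab he.symm)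
    · exact h
  have hkkn : kk < C.n := ZMod.val_lt _
  have hkcast : ((kk : ℕ) : ZMod C.n) = b - a := ZMod.natCast_rightInverse _
  have hq0' : q 0 = (C.rot a).f 0 := by
    rw [hq0]; show C.f a = C.f (0 + a); rw [zero_add]
  have hqL' : q L = (C.rot a).f ((kk : ℕ) : ZMod (C.rot a).n) := by
    rw [hqL]; show C.f b = C.f (((kk : ℕ) : ZMod C.n) + a)
    rw [hkcast, sub_add_cancel]
  have hqoff' : ∀ s, 0 < s → s < L → q s ∉ Set.range (C.rot a).f := by
    intro s h1 h2 hmem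
    exact hqoff s h1 h2 (by rwa [DirCycle.rot_range] at hmem)
  have hne' : ¬ (kk = 1 ∧ L = 1) := hne
  obtain ⟨C', hsub, hrem⟩ := reroute (C.rot a) kk L hkk1 hkkn hL1 q hq0' hqL' hqinj hqoff'
    (fun s hs => Or.inr (hqedge s hs)) hne'
  have hDedges : (C.rot a).edges = C.edges := DirCycle.rot_edges C a
  have hsub2 : C'.edges ∩ {p : V × V | S' p.1 p.2}
      ⊆ C.edges ∩ {p : V × V | S' p.1 p.2} := by
    rintro e ⟨he1, he2⟩
    rcases hsub e he1 with h | ⟨s, hs, rfl⟩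
    · exact ⟨hDedges ▸ h, he2⟩
    · exact absurd he2 (hdisj _ _ (hqedge s hs))
  have hopt2 := hopt C' hsub2
  have hT : ∀ t : ℕ, t < kk →
      T ((C.rot a).f ((t : ℕ) : ZMod C.n)) ((C.rot a).f (((t : ℕ) : ZMod C.n) + 1)) := by
    intro t ht
    rcases (C.rot a).step ((t : ℕ) : ZMod C.n) with h | h
    · exfalso
      have hmem : (((C.rot a).f ((t : ℕ) : ZMod C.n), (C.rot a).f (((t : ℕ) : ZMod C.n) + 1)) : V × V)
          ∈ C.edges ∩ {p : V × V | S' p.1 p.2} :=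
        ⟨hDedges ▸ ⟨((t : ℕ) : ZMod C.n), rfl, rfl⟩, h⟩
      exact hrem t ht (hopt2 hmem).1
    · exact h
  have adj_of_T : ∀ {x y : V}, T x y → (SimpleGraph.fromRel T).Adj x y := by
    intro x y h
    rw [SimpleGraph.fromRel_adj]
    exact ⟨fun he => hirr y (he ▸ h), Or.inl h⟩
  let g1 : ℕ → V := fun t => (C.rot a).f ((t : ℕ) : ZMod C.n)
  have hadj1 : ∀ s, s < kk → (SimpleGraph.fromRel T).Adj (g1 s) (g1 (s + 1)) := by
    intro s hs
    have hc : ((s + 1 : ℕ) : ZMod C.n) = ((s : ℕ) : ZMod C.n) + 1 := by push_cast; ring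
    have h := hT s hs
    apply adj_of_T
    show T ((C.rot a).f ((s : ℕ) : ZMod C.n)) ((C.rot a).f ((s + 1 : ℕ) : ZMod C.n))
    rwa [hc]
  let W1 := mkWalk _ g1 kk hadj1
  have hW1path : W1.IsPath := by
    apply mkWalk_isPath
    intro s t hs ht h
    have h2 := (C.rot a).inj h
    have h3 := congrArg ZMod.val h2
    rwa [ZMod.val_cast_of_lt (by omega), ZMod.val_cast_of_lt (by omega)] at h3
  have hW1s : g1 0 = C.f a := by
    show C.f (((0 : ℕ) : ZMod C.n) + a) = C.f a
    norm_num
  have hW1t : g1 kk = C.f b := by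
    show C.f (((kk : ℕ) : ZMod C.n) + a) = C.f b
    rw [hkcast, sub_add_cancel]
  let W2 := mkWalk _ q L (fun s hs => adj_of_T (hqedge s hs))
  have hW2path : W2.IsPath := mkWalk_isPath _ _ _ _ hqinj
  obtain ⟨P, -, hP⟩ := htree.existsUnique_path (C.f a) (C.f b)
  have e1 : W1.copy hW1s hW1t = P :=
    hP _ ((SimpleGraph.Walk.isPath_copy _ _ _).mpr hW1path)
  have e2 : W2.copy hq0 hqL = P :=
    hP _ ((SimpleGraph.Walk.isPath_copy _ _ _).mpr hW2path)
  have hWeq : W1.copy hW1s hW1t = W2.copy hq0 hqL := e1.trans e2.symm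
  rcases Nat.lt_or_ge L 2 with hL2 | hL2
  · have hLeq : L = 1 := by omega
    have l1 := congrArg SimpleGraph.Walk.length hWeq
    rw [SimpleGraph.Walk.length_copy, SimpleGraph.Walk.length_copy,
      mkWalk_length, mkWalk_length] at l1
    exact hne' ⟨by omega, hLeq⟩
  · have hmem2 : q 1 ∈ (W2.copy hq0 hqL).support := by
      rw [SimpleGraph.Walk.support_copy]
      exact mkWalk_mem_support _ _ _ _ 1 (by omega)
    rw [← hWeq, SimpleGraph.Walk.support_copy] at hmem2
    obtain ⟨s, hs, hqs⟩ := mkWalk_support_subset _ _ _ _ _ hmem2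
    have hmr : q 1 ∈ Set.range (C.rot a).f := ⟨_, hqs.symm⟩
    rw [DirCycle.rot_range] at hmr
    exact hqoff 1 (by omega) (by omega) hmr


set_option maxHeartbeats 2000000 in
/-- let `S'` be a digraph and `T` an edge-disjoint directed tree on
the same vertex set, and let `C` be a directed cycle of `S' ∪ T` whose set of
`S'`-edges is minimal (an optimal cycle).  Then for every directed path
`p 0, …, p m` of `T`, the intersection of `C` with the path is a directed path
or null: the indices of path vertices lying on `C` form an interval, and any two
consecutive path vertices lying on `C` are joined by an edge of `C`. -/
theorem stmt11 {V : Type} [Fintype V] (S' T : V → V → Prop)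
    (hdisj : ∀ a b, T a b → ¬ S' a b)
    (htree : (SimpleGraph.fromRel T).IsTree)
    (hirr : ∀ a, ¬ T a a) (hasym : ∀ a b, T a b → ¬ T b a)
    (C : DirCycle (fun a b => S' a b ∨ T a b))
    (hopt : ∀ C' : DirCycle (fun a b => S' a b ∨ T a b),
      C'.edges ∩ {p : V × V | S' p.1 p.2} ⊆ C.edges ∩ {p : V × V | S' p.1 p.2} →
      C.edges ∩ {p : V × V | S' p.1 p.2} ⊆ C'.edges ∩ {p : V × V | S' p.1 p.2})
    (m : ℕ) (p : Fin (m + 1) → V) (hpinj : Function.Injective p)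
    (hpath : ∀ i : Fin m, T (p i.castSucc) (p i.succ)) :
    (∀ i j k : Fin (m + 1), i ≤ j → j ≤ k →
      p i ∈ Set.range C.f → p k ∈ Set.range C.f → p j ∈ Set.range C.f) ∧
    (∀ i : Fin m, p i.castSucc ∈ Set.range C.f → p i.succ ∈ Set.range C.f →
      (p i.castSucc, p i.succ) ∈ C.edges) := by
  classical
  haveI : NeZero C.n := ⟨C.pos.ne'⟩
  constructor
  · intro i j k hij hjk hi hk
    by_contra hj
    have hSl : (Finset.filter (fun s => p s ∈ Set.range C.f) (Finset.Icc i j)).Nonempty :=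
      ⟨i, Finset.mem_filter.mpr ⟨Finset.mem_Icc.mpr ⟨le_refl i, hij⟩, hi⟩⟩
    have hSr : (Finset.filter (fun s => p s ∈ Set.range C.f) (Finset.Icc j k)).Nonempty :=
      ⟨k, Finset.mem_filter.mpr ⟨Finset.mem_Icc.mpr ⟨hjk, le_refl k⟩, hk⟩⟩
    obtain ⟨i', hi'def⟩ : ∃ x : Fin (m + 1),
        x = (Finset.filter (fun s => p s ∈ Set.range C.f) (Finset.Icc i j)).max' hSl :=
      ⟨_, rfl⟩
    obtain ⟨k', hk'def⟩ : ∃ x : Fin (m + 1),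
        x = (Finset.filter (fun s => p s ∈ Set.range C.f) (Finset.Icc j k)).min' hSr :=
      ⟨_, rfl⟩
    have hi'mem := Finset.max'_mem _ hSl
    rw [← hi'def, Finset.mem_filter, Finset.mem_Icc] at hi'mem
    obtain ⟨⟨hii', hi'j⟩, hi'C⟩ := hi'mem
    have hk'mem := Finset.min'_mem _ hSr
    rw [← hk'def, Finset.mem_filter, Finset.mem_Icc] at hk'mem
    obtain ⟨⟨hjk', hk'k⟩, hk'C⟩ := hk'mem
    have hi'max : ∀ s, i ≤ s → s ≤ j → p s ∈ Set.range C.f → s ≤ i' := fun s h1 h2 h3 =>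
      hi'def ▸ Finset.le_max' _ s (Finset.mem_filter.mpr ⟨Finset.mem_Icc.mpr ⟨h1, h2⟩, h3⟩)
    have hk'min : ∀ s, j ≤ s → s ≤ k → p s ∈ Set.range C.f → k' ≤ s := fun s h1 h2 h3 =>
      hk'def ▸ Finset.min'_le _ s (Finset.mem_filter.mpr ⟨Finset.mem_Icc.mpr ⟨h1, h2⟩, h3⟩)
    have hi'lt : i' < j := lt_of_le_of_ne hi'j (fun h => hj (h ▸ hi'C))
    have hltk' : j < k' := lt_of_le_of_ne hjk' (fun h => hj (h.symm ▸ hk'C))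
    have hbetween : ∀ s : Fin (m + 1), i' < s → s < k' → p s ∉ Set.range C.f := by
      intro s h1 h2 hmem
      rcases le_total s j with h | h
      · exact absurd (hi'max s (le_trans hii' (le_of_lt h1)) h hmem) (not_le.mpr h1)
      · exact absurd (hk'min s h (le_trans (le_of_lt h2) hk'k) hmem) (not_le.mpr h2)
    obtain ⟨A, hA⟩ := hi'C
    obtain ⟨B, hB⟩ := hk'C
    have hi'k' : i' < k' := lt_trans hi'lt hltk'
    have hAB : A ≠ B := by
      intro h
      have : p i' = p k' := by rw [← hA, ← hB, h]
      exact absurd (hpinj this) (ne_of_lt hi'k')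
    have hvj1 : i'.val < j.val := hi'lt
    have hvj2 : j.val < k'.val := hltk'
    have hvm : k'.val < m + 1 := k'.isLt
    obtain ⟨L, hLdef⟩ : ∃ L : ℕ, L = k'.val - i'.val := ⟨_, rfl⟩
    have hL2 : 2 ≤ L := by omega
    obtain ⟨q, hqdef⟩ : ∃ q : ℕ → V,
        q = fun s => p ⟨min (i'.val + s) m, Nat.lt_succ_of_le (min_le_right _ _)⟩ :=
      ⟨_, rfl⟩
    have hq : ∀ s (hs : s ≤ L), q s = p ⟨i'.val + s, by omega⟩ := by
      intro s hs
      have hmin : min (i'.val + s) m = i'.val + s := by omega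
      rw [hqdef]
      exact congrArg p (Fin.ext hmin)
    have hfin : ∀ (u : ℕ) (hu : u < m + 1), u = i'.val → (⟨u, hu⟩ : Fin (m + 1)) = i' :=
      fun u hu h => Fin.ext h
    refine main_aux S' T hdisj htree hirr C hopt A B hAB L (by omega) q ?_ ?_ ?_ ?_ ?_ ?_
    · rw [hq 0 (by omega), hfin _ _ (by omega), hA]
    · rw [hq L (by omega)]
      have : (⟨i'.val + L, by omega⟩ : Fin (m + 1)) = k' :=
        Fin.ext (show i'.val + L = k'.val by omega)
      rw [this, hB]
    · intro s t hs ht h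
      rw [hq s hs, hq t ht] at h
      have := congrArg Fin.val (hpinj h)
      simp only at this
      omega
    · intro s h1 h2 hmem
      rw [hq s (by omega)] at hmem
      refine hbetween ⟨i'.val + s, by omega⟩ ?_ ?_ hmem
      · show i'.val < i'.val + s
        omega
      · show i'.val + s < k'.val
        omega
    · intro s hs
      rw [hq s (by omega), hq (s + 1) (by omega)]
      have hu : i'.val + s < m := by omega
      have h := hpath ⟨i'.val + s, hu⟩
      have e1 : (⟨i'.val + s, hu⟩ : Fin m).castSucc = ⟨i'.val + s, by omega⟩ := rfl
      have e2 : (⟨i'.val + s, hu⟩ : Fin m).succ = ⟨i'.val + s + 1, by omega⟩ := rfl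
      rw [e1, e2] at h
      exact h
    · rintro ⟨-, h2⟩
      omega
  · intro i hx hy
    obtain ⟨A, hA⟩ := hx
    obtain ⟨B, hB⟩ := hy
    have hAB : A ≠ B := by
      intro h
      have hpp : p i.castSucc = p i.succ := by rw [← hA, ← hB, h]
      have := congrArg Fin.val (hpinj hpp)
      simp only [Fin.coe_castSucc, Fin.val_succ] at this
      omega
    by_cases hb1 : B = A + 1
    · exact ⟨A, hA.symm, by rw [hb1] at hB; exact hB.symm⟩
    · exfalso
      refine main_aux S' T hdisj htree hirr C hopt A B hAB 1 le_rfl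
        (fun s => if s = 0 then p i.castSucc else p i.succ) ?_ ?_ ?_ ?_ ?_ ?_
      · simpa using hA.symm
      · simpa using hB.symm
      · intro s t hs ht h
        by_contra hne2
        have hst : (s = 0 ∧ t = 1) ∨ (s = 1 ∧ t = 0) := by omega
        have hxy : p i.castSucc = p i.succ := by
          rcases hst with ⟨rfl, rfl⟩ | ⟨rfl, rfl⟩
          · simpa using h
          · simpa using h.symm
        have := congrArg Fin.val (hpinj hxy)
        simp only [Fin.coe_castSucc, Fin.val_succ] at this
        omega
      · intro s h1 h2
        omega
      · intro s hs
        have hs0 : s = 0 := by omega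
        subst hs0
        simpa using hpath i
      · rintro ⟨h1, -⟩
        apply hb1
        have h2 : ((1 : ℕ) : ZMod C.n) = B - A := by
          rw [← h1]
          exact ZMod.natCast_rightInverse _
        have h3 : B - A = 1 := by rw [← h2]; push_cast; ring
        rw [sub_eq_iff_eq_add] at h3
        rw [h3]; ring
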